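/- Totient of a mixed expansion in two directions: let S be a tuple and let s, t : Fin n be directions. Suppose k₁ is the least positive integer with E_s^{k₁} S = 0, k₂ is the least positive integer with E_t^{k₂} S = 0, and suppose that for all u, v with 1 ≤ u < k₂ and 1 ≤ v < k₁ one has E_s^v (E_t^u S) ≠ 0 (no dropler effect). Then min(k₁, k₂) is the least positive integer k with (E_t ∘ E_s)^k S = 0; that is, Φ[(E_t ∘ E_s), S] = min(k₁, k₂). -/

import Mathlib

open MvPolynomial MeasureTheory

/-- The expansion operator in direction `i`: the paper's composite map
`(γ⁻¹ ∘ β ∘ γ ∘ ∇)_{[x_i]}`, sending a tuple `S` to the tuple whose `k`-th entry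
is the sum of the partial derivatives (in direction `i`) of all other entries. -/
noncomputable def expandDir {s n : ℕ} (i : Fin n) (S : Fin s → MvPolynomial (Fin n) ℝ) :
    Fin s → MvPolynomial (Fin n) ℝ :=
  fun k => ∑ t ∈ Finset.univ.filter (fun t => t ≠ k), MvPolynomial.pderiv i (S t)

/-- The mixed expansion operator `M = E_{σ 0} ∘ E_{σ 1} ∘ ⋯ ∘ E_{σ (l-1)}`. -/
noncomputable def mixedExpand {s n l : ℕ} (σ : Fin l → Fin n) :
    (Fin s → MvPolynomial (Fin n) ℝ) → (Fin s → MvPolynomial (Fin n) ℝ) :=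
  (List.ofFn (fun i => expandDir (s := s) (σ i))).foldr (fun f g => f ∘ g) id

lemma pderiv_comm' {σ : Type*} [DecidableEq σ] (i j : σ) (p : MvPolynomial σ ℝ) :
    pderiv i (pderiv j p) = pderiv j (pderiv i p) := by
  induction p using MvPolynomial.induction_on' with
  | monomial m a =>
    rcases eq_or_ne i j with rfl | hij
    · rfl
    · simp only [pderiv_monomial]
      rw [Finsupp.tsub_apply, Finsupp.tsub_apply, Finsupp.single_apply,
        Finsupp.single_apply, if_neg hij, if_neg (Ne.symm hij)]
      simp only [Nat.sub_zero]
      rw [tsub_right_comm]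
      ring_nf
  | add p q hp hq => simp [hp, hq]

lemma expandDir_zero {s n : ℕ} (i : Fin n) : expandDir (s := s) i 0 = 0 := by
  funext k
  simp [expandDir]

lemma expandDir_comm {s n : ℕ} (d₁ d₂ : Fin n) :
    Function.Commute (expandDir (s := s) d₁) (expandDir d₂) := by
  intro S
  funext k
  simp only [Function.comp_apply, expandDir, map_sum]
  exact Finset.sum_congr rfl fun t _ => Finset.sum_congr rfl fun u _ => pderiv_comm' _ _ _

theorem totient_mixed_two (s n : ℕ) (S : Fin s → MvPolynomial (Fin n) ℝ)
    (d₁ d₂ : Fin n) (k₁ k₂ : ℕ)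
    (h₁ : IsLeast {m | 0 < m ∧ (expandDir d₁)^[m] S = 0} k₁)
    (h₂ : IsLeast {m | 0 < m ∧ (expandDir d₂)^[m] S = 0} k₂)
    (hnd : ∀ u v : ℕ, 1 ≤ u → u < k₂ → 1 ≤ v → v < k₁ →
      (expandDir d₁)^[v] ((expandDir d₂)^[u] S) ≠ 0) :
    IsLeast {k | 0 < k ∧ (expandDir d₂ ∘ expandDir d₁)^[k] S = 0} (min k₁ k₂) := by
  obtain ⟨⟨hk₁pos, hk₁⟩, hk₁least⟩ := h₁
  obtain ⟨⟨hk₂pos, hk₂⟩, hk₂least⟩ := h₂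
  have hcomm : Function.Commute (expandDir (s := s) d₂) (expandDir d₁) :=
    (expandDir_comm d₁ d₂).symm
  have hsplit : ∀ k, (expandDir d₂ ∘ expandDir d₁)^[k] S
      = (expandDir d₂)^[k] ((expandDir d₁)^[k] S) := by
    intro k
    rw [hcomm.comp_iterate]
    rfl
  constructor
  · refine ⟨lt_min hk₁pos hk₂pos, ?_⟩
    rw [hsplit]
    rcases min_cases k₁ k₂ with ⟨hm, _⟩ | ⟨hm, _⟩
    · rw [hm, hk₁]
      exact Function.iterate_fixed (expandDir_zero d₂) k₁
    · rw [hm, hcomm.iterate_iterate k₂ k₂ S, hk₂]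
      exact Function.iterate_fixed (expandDir_zero d₁) k₂
  · rintro k ⟨hkpos, hk⟩
    by_contra hlt
    push_neg at hlt
    have hk1 : k < k₁ := lt_of_lt_of_le hlt (min_le_left _ _)
    have hk2 : k < k₂ := lt_of_lt_of_le hlt (min_le_right _ _)
    have := hnd k k hkpos hk2 hkpos hk1
    rw [hsplit, hcomm.iterate_iterate k k S] at hk
    exact this hk
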